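/- arXiv:2501.17342 — 2 statements merged into one kernel-verified Lean document; each statement's English description precedes it below -/
import Mathlib

section
/- If C is a class of groups closed under taking subgroups and extensions, X is a residually-C group, and Y is a retract of X, then Y is C-separable in X. -/
/-- If `C` is a class of groups closed under taking subgroups and extensions,
`X` is a residually-`C` group, and `Y` is a retract of `X`, then `Y` is
`C`-separable in `X`. -/
theorem retract_separable
    (C : ∀ (G : Type) [Group G], Prop)
    (hsub : ∀ (G : Type) [Group G] (K : Type) [Group K] (f : K →* G),
      Function.Injective f → C G → C K)
    (hext : ∀ (G : Type) [Group G] (N : Subgroup G) (hN : N.Normal),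
      C N → @C (G ⧸ N) (@QuotientGroup.Quotient.group G _ N hN) → C G)
    (X : Type) [Group X]
    (hres : ∀ x : X, x ≠ 1 → ∃ (K : Type) (_ : Group K) (σ : X →* K),
      Function.Surjective σ ∧ C K ∧ σ x ≠ 1)
    (Y : Subgroup X) (ρ : X →* X)
    (hρY : ∀ x : X, ρ x ∈ Y) (hρid : ∀ y ∈ Y, ρ y = y) :
    ∀ x : X, x ∉ Y → ∃ (K : Type) (_ : Group K) (σ : X →* K),
      Function.Surjective σ ∧ C K ∧ σ x ∉ σ '' (Y : Set X) := by
  intro x hx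
  have hz : x * (ρ x)⁻¹ ≠ 1 := by
    intro h
    apply hx
    have hxe : x = ρ x := by
      have := mul_inv_eq_one.mp h
      exact this
    rw [hxe]; exact hρY x
  obtain ⟨K₁, _, σ₁, hσ₁surj, hCK₁, hσ₁z⟩ := hres _ hz
  -- C (K₁ × K₁)
  have hprod : C (K₁ × K₁) := by
    refine hext (K₁ × K₁) (MonoidHom.snd K₁ K₁).ker inferInstance ?_ ?_
    · refine hsub _ _ ((MonoidHom.fst K₁ K₁).comp (MonoidHom.snd K₁ K₁).ker.subtype)
        ?_ hCK₁
      rintro ⟨⟨a, b⟩, hb⟩ ⟨⟨c, d⟩, hd⟩ h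
      simp only [MonoidHom.mem_ker, MonoidHom.coe_snd] at hb hd
      simp only [MonoidHom.coe_comp, Function.comp_apply, Subgroup.coe_subtype,
        MonoidHom.coe_fst] at h
      subst hb; subst hd
      exact Subtype.ext (Prod.ext h rfl)
    · exact hsub _ _
        (QuotientGroup.quotientKerEquivOfSurjective (MonoidHom.snd K₁ K₁)
          (fun b => ⟨(1, b), rfl⟩)).toMonoidHom
        (QuotientGroup.quotientKerEquivOfSurjective (MonoidHom.snd K₁ K₁)
          (fun b => ⟨(1, b), rfl⟩)).injective hCK₁
  set φ : X →* K₁ × K₁ := σ₁.prod (σ₁.comp ρ) with hφ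
  refine ⟨φ.range, inferInstance, φ.rangeRestrict, φ.rangeRestrict_surjective,
    hsub _ _ φ.range.subtype φ.range.subtype_injective hprod, ?_⟩
  rintro ⟨y, hy, heq⟩
  have hφeq : φ y = φ x := congrArg Subtype.val heq
  have h1 : σ₁ y = σ₁ x := congrArg Prod.fst hφeq
  have h2 : σ₁ (ρ y) = σ₁ (ρ x) := congrArg Prod.snd hφeq
  rw [hρid y hy, h1] at h2
  apply hσ₁z
  rw [map_mul, map_inv, ← h2, mul_inv_cancel]
end

section
/- Let C be a class of groups closed under subgroups and finite direct products, G a group, Y, Z ≤ G subgroups, y ∈ G, and suppose H = Z ∪ yZ is a subgroup of G (i.e., H is the union of Z and the coset yZ). If for every g ∈ G \ H both g and y⁻¹g lie outside Z, and Z is C-separable in G, then H is C-separable in G. -/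
open Pointwise

/-- Let `C` be a class of groups closed under subgroups and finite direct
products, `G` a group, `Z ≤ G` a subgroup, `y ∈ G`, and suppose `H` is a
subgroup of `G` whose underlying set is `Z ∪ yZ`. If for every `g ∈ G \ H`
both `g` and `y⁻¹g` lie outside `Z`, and `Z` is `C`-separable in `G`, then
`H` is `C`-separable in `G`. -/
theorem union_coset_separable
    (C : ∀ (G : Type) [Group G], Prop)
    (hsub : ∀ (G : Type) [Group G] (K : Type) [Group K] (f : K →* G),
      Function.Injective f → C G → C K)
    (hprod : ∀ (G : Type) [Group G] (K : Type) [Group K], C G → C K → C (G × K))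
    (G : Type) [Group G] (Z H : Subgroup G) (y : G)
    (hH : (H : Set G) = (Z : Set G) ∪ y • (Z : Set G))
    (hout : ∀ g : G, g ∉ H → g ∉ Z ∧ y⁻¹ * g ∉ Z)
    (hZsep : ∀ g : G, g ∉ Z → ∃ (N : Subgroup G) (hN : N.Normal),
      @C (G ⧸ N) (@QuotientGroup.Quotient.group G _ N hN) ∧
      g ∉ (Z : Set G) * (N : Set G)) :
    ∀ g : G, g ∉ H → ∃ (N : Subgroup G) (hN : N.Normal),
      @C (G ⧸ N) (@QuotientGroup.Quotient.group G _ N hN) ∧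
      g ∉ (H : Set G) * (N : Set G) := by
  intro g hg
  obtain ⟨hg1, hg2⟩ := hout g hg
  obtain ⟨N₁, hN₁, hC₁, hsep₁⟩ := hZsep g hg1
  obtain ⟨N₂, hN₂, hC₂, hsep₂⟩ := hZsep (y⁻¹ * g) hg2
  haveI := hN₁
  haveI := hN₂
  refine ⟨N₁ ⊓ N₂, inferInstance, ?_, ?_⟩
  · -- C (G ⧸ (N₁ ⊓ N₂)) via embedding into product
    set φ : G →* (G ⧸ N₁) × (G ⧸ N₂) :=
      (QuotientGroup.mk' N₁).prod (QuotientGroup.mk' N₂) with hφ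
    have hker : ∀ x ∈ N₁ ⊓ N₂, φ x = 1 := by
      intro x hx
      have h1 : x ∈ N₁ := hx.1
      have h2 : x ∈ N₂ := hx.2
      simp [hφ, Prod.ext_iff, QuotientGroup.eq_one_iff, h1, h2]
    set f : G ⧸ (N₁ ⊓ N₂) →* (G ⧸ N₁) × (G ⧸ N₂) :=
      QuotientGroup.lift (N₁ ⊓ N₂) φ hker with hf
    have hinj : Function.Injective f := by
      rw [← MonoidHom.ker_eq_bot_iff]
      rw [eq_bot_iff]
      intro q hq
      obtain ⟨x, rfl⟩ := QuotientGroup.mk_surjective q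
      have : φ x = 1 := hq
      have h1 : (x : G ⧸ N₁) = 1 := congrArg Prod.fst this
      have h2 : (x : G ⧸ N₂) = 1 := congrArg Prod.snd this
      have hx1 : x ∈ N₁ := (QuotientGroup.eq_one_iff x).mp h1
      have hx2 : x ∈ N₂ := (QuotientGroup.eq_one_iff x).mp h2
      have : x ∈ N₁ ⊓ N₂ := ⟨hx1, hx2⟩
      simpa [Subgroup.mem_bot, QuotientGroup.eq_one_iff] using this
    exact hsub _ _ f hinj (hprod _ _ hC₁ hC₂)
  · -- g ∉ H * (N₁ ⊓ N₂)
    rintro ⟨h, hhH, n, hn, rfl⟩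
    have hhH' : h ∈ (Z : Set G) ∪ y • (Z : Set G) := by rw [← hH]; exact hhH
    rcases hhH' with hz | hyz
    · exact hsep₁ ⟨h, hz, n, hn.1, rfl⟩
    · obtain ⟨z, hz, rfl⟩ := hyz
      refine hsep₂ ⟨z, hz, n, hn.2, ?_⟩
      simp [smul_eq_mul, mul_assoc]
end
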